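/- Let m ≥ 0 be an integer, let f₀,…,f_m, q₀, q₁, κ₁, κ₂ be real constants, and set f̂(x₁) = Σ_{k=0}^m f_k x₁^k, q̂(x₁) = q₀ + q₁ x₁ − Σ_{k=0}^m f_k x₁^{k+2}/((k+2)(k+1)), and p̂(x₁,x₂) = q₀ + q₁ x₁ − Σ_{k=0}^m f_k·Re((x₁ + i x₂)^{k+2})/((k+2)(k+1)). Then p̂ is harmonic on ℝ² (hence on Ω = ℝ² ∖ Σ), and on Σ the pair (p̂, q̂) satisfies: −(κ₁/2)p̂⁺_{x₂} − (κ₁/2)p̂⁻_{x₂} + p̂⁺ = q̂; (κ₁/2)p̂⁺_{x₂} + (κ₁/2)p̂⁻_{x₂} + p̂⁻ = q̂; and −q̂_{x₁x₁} = f̂ + κ₂(p̂⁺_{x₂} − p̂⁻_{x₂}). -/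

import Mathlib

open Complex Filter Real

/-- `f̂(x₁) = Σ_{k=0}^m f_k x₁^k`. -/
noncomputable def fPoly (m : ℕ) (f : ℕ → ℝ) (x₁ : ℝ) : ℝ :=
  ∑ k ∈ Finset.range (m + 1), f k * x₁ ^ k

/-- `q̂(x₁) = q₀ + q₁x₁ - Σ_{k=0}^m f_k x₁^{k+2}/((k+2)(k+1))`. -/
noncomputable def qPoly (m : ℕ) (f : ℕ → ℝ) (q₀ q₁ : ℝ) (x₁ : ℝ) : ℝ :=
  q₀ + q₁ * x₁ - ∑ k ∈ Finset.range (m + 1), f k * x₁ ^ (k + 2) / ((k + 2) * (k + 1))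

/-- `p̂(x₁,x₂) = q₀ + q₁x₁ - Σ_{k=0}^m f_k·Re((x₁+ix₂)^{k+2})/((k+2)(k+1))`. -/
noncomputable def pPoly (m : ℕ) (f : ℕ → ℝ) (q₀ q₁ : ℝ) (x₁ x₂ : ℝ) : ℝ :=
  q₀ + q₁ * x₁ - ∑ k ∈ Finset.range (m + 1),
    f k * (((x₁ : ℂ) + Complex.I * (x₂ : ℂ)) ^ (k + 2)).re / ((k + 2) * (k + 1))

/-- Second partial derivative in the first variable. -/
noncomputable def dxx (p : ℝ → ℝ → ℝ) (x y : ℝ) : ℝ :=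
  deriv (fun t => deriv (fun s => p s y) t) x

/-- Second partial derivative in the second variable. -/
noncomputable def dyy (p : ℝ → ℝ → ℝ) (x y : ℝ) : ℝ :=
  deriv (fun t => deriv (fun s => p x s) t) y

/-- Partial derivative in the second variable. -/
noncomputable def dy (p : ℝ → ℝ → ℝ) (x y : ℝ) : ℝ := deriv (fun s => p x s) y

/- ### Auxiliary machinery -/

lemma key (a : ℂ) (n : ℕ) {c : ℝ → ℂ} {c' : ℂ} {x : ℝ} (hc : HasDerivAt c c' x) :
    HasDerivAt (fun t => (a * (c t) ^ n).re) ((a * (c' * (n * (c x) ^ (n - 1)))).re) x := by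
  have h1 : HasDerivAt (fun t => a * (c t) ^ n) (a * (c' * (n * (c x) ^ (n - 1)))) x := by
    have hp : HasDerivAt (fun z : ℂ => z ^ n) ((n : ℂ) * (c x) ^ (n - 1)) (c x) :=
      hasDerivAt_pow n (c x)
    exact ((hp.scomp x hc).const_mul a).congr_deriv (by simp [smul_eq_mul])
  exact (Complex.reCLM.hasFDerivAt.comp_hasDerivAt x h1)

lemma inner_x (y : ℝ) (x : ℝ) : HasDerivAt (fun t : ℝ => (t : ℂ) + Complex.I * y) 1 x := by
  simpa using (Complex.ofRealCLM.hasDerivAt (x := x)).add_const (Complex.I * y)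

lemma inner_y (x : ℝ) (y : ℝ) : HasDerivAt (fun s : ℝ => (x : ℂ) + Complex.I * s) Complex.I y := by
  simpa using ((Complex.ofRealCLM.hasDerivAt (x := y)).const_mul Complex.I).const_add (x : ℂ)

/-- First partial of `p̂` in `x₁`. -/
noncomputable def P1 (m : ℕ) (f : ℕ → ℝ) (q₁ x y : ℝ) : ℝ :=
  q₁ - ∑ k ∈ Finset.range (m + 1),
    f k * ((((x : ℂ) + Complex.I * y) ^ (k + 1)).re) / ((k : ℝ) + 1)

/-- First partial of `p̂` in `x₂`. -/
noncomputable def P2 (m : ℕ) (f : ℕ → ℝ) (x y : ℝ) : ℝ :=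
  - ∑ k ∈ Finset.range (m + 1),
    f k * ((Complex.I * ((x : ℂ) + Complex.I * y) ^ (k + 1)).re) / ((k : ℝ) + 1)

lemma hasDerivAt_p_x (m : ℕ) (f : ℕ → ℝ) (q₀ q₁ y x : ℝ) :
    HasDerivAt (fun t => pPoly m f q₀ q₁ t y) (P1 m f q₁ x y) x := by
  unfold pPoly P1
  apply HasDerivAt.sub
  · simpa using ((hasDerivAt_id x).const_mul q₁).const_add q₀
  · apply HasDerivAt.fun_sum
    intro k _
    have h := (((key 1 (k + 2) (inner_x y x)).const_mul (f k)).div_const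
      (((k : ℝ) + 2) * ((k : ℝ) + 1)))
    simp only [one_mul] at h
    refine h.congr_deriv ?_
    have h2 : ((k : ℝ) + 2) ≠ 0 := by positivity
    have h1 : ((k : ℝ) + 1) ≠ 0 := by positivity
    simp only [Nat.add_sub_cancel, Complex.mul_re, Complex.natCast_re, Complex.natCast_im]
    push_cast
    field_simp
    ring

lemma hasDerivAt_p_y (m : ℕ) (f : ℕ → ℝ) (q₀ q₁ x y : ℝ) :
    HasDerivAt (fun s => pPoly m f q₀ q₁ x s) (P2 m f x y) y := by
  unfold pPoly P2
  have : HasDerivAt (fun _ : ℝ => q₀ + q₁ * x) 0 y := hasDerivAt_const y _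
  refine (this.sub ?_).congr_deriv (by ring)
  apply HasDerivAt.fun_sum
  intro k _
  have h := (((key 1 (k + 2) (inner_y x y)).const_mul (f k)).div_const
    (((k : ℝ) + 2) * ((k : ℝ) + 1)))
  simp only [one_mul] at h
  refine h.congr_deriv ?_
  have h2 : ((k : ℝ) + 2) ≠ 0 := by positivity
  have h1 : ((k : ℝ) + 1) ≠ 0 := by positivity
  simp only [Nat.add_sub_cancel, Complex.mul_re, Complex.mul_im, Complex.I_re, Complex.I_im,
    Complex.natCast_re, Complex.natCast_im]
  push_cast
  field_simp
  ring

lemma hasDerivAt_P1_x (m : ℕ) (f : ℕ → ℝ) (q₁ y x : ℝ) :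
    HasDerivAt (fun t => P1 m f q₁ t y)
      (- ∑ k ∈ Finset.range (m + 1), f k * ((((x : ℂ) + Complex.I * y) ^ k).re)) x := by
  unfold P1
  have : HasDerivAt (fun _ : ℝ => q₁) 0 x := hasDerivAt_const x _
  refine (this.sub ?_).congr_deriv (by ring)
  apply HasDerivAt.fun_sum
  intro k _
  have h := (((key 1 (k + 1) (inner_x y x)).const_mul (f k)).div_const ((k : ℝ) + 1))
  simp only [one_mul] at h
  refine h.congr_deriv ?_
  have h1 : ((k : ℝ) + 1) ≠ 0 := by positivity
  simp only [Nat.add_sub_cancel, Complex.mul_re, Complex.natCast_re, Complex.natCast_im]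
  push_cast
  field_simp
  ring

lemma hasDerivAt_P2_y (m : ℕ) (f : ℕ → ℝ) (x y : ℝ) :
    HasDerivAt (fun s => P2 m f x s)
      (∑ k ∈ Finset.range (m + 1), f k * ((((x : ℂ) + Complex.I * y) ^ k).re)) y := by
  unfold P2
  have hsum : HasDerivAt (fun s : ℝ => ∑ k ∈ Finset.range (m + 1),
      f k * ((Complex.I * ((x : ℂ) + Complex.I * s) ^ (k + 1)).re) / ((k : ℝ) + 1))
      (- ∑ k ∈ Finset.range (m + 1), f k * ((((x : ℂ) + Complex.I * y) ^ k).re)) y := by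
    rw [← Finset.sum_neg_distrib]
    apply HasDerivAt.fun_sum
    intro k _
    have h := (((key Complex.I (k + 1) (inner_y x y)).const_mul (f k)).div_const ((k : ℝ) + 1))
    refine h.congr_deriv ?_
    have h1 : ((k : ℝ) + 1) ≠ 0 := by positivity
    simp only [Nat.add_sub_cancel, Complex.mul_re, Complex.mul_im, Complex.I_re, Complex.I_im,
      Complex.natCast_re, Complex.natCast_im]
    push_cast
    field_simp
    ring
  simpa using hsum.fun_neg

lemma cont_p (m : ℕ) (f : ℕ → ℝ) (q₀ q₁ x₁ : ℝ) :
    Continuous fun y : ℝ => pPoly m f q₀ q₁ x₁ y := by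
  unfold pPoly
  apply Continuous.sub continuous_const
  apply continuous_finset_sum
  intro k _
  apply Continuous.div_const
  exact continuous_const.mul (Complex.continuous_re.comp
    ((continuous_const.add (continuous_const.mul Complex.continuous_ofReal)).pow _))

lemma cont_P2 (m : ℕ) (f : ℕ → ℝ) (x₁ : ℝ) : Continuous fun y : ℝ => P2 m f x₁ y := by
  unfold P2
  apply Continuous.neg
  apply continuous_finset_sum
  intro k _
  apply Continuous.div_const
  exact continuous_const.mul (Complex.continuous_re.comp (continuous_const.mul
    ((continuous_const.add (continuous_const.mul Complex.continuous_ofReal)).pow _)))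

lemma P2_zero (m : ℕ) (f : ℕ → ℝ) (x : ℝ) : P2 m f x 0 = 0 := by
  unfold P2
  simp [← Complex.ofReal_pow]

lemma pPoly_zero (m : ℕ) (f : ℕ → ℝ) (q₀ q₁ x : ℝ) : pPoly m f q₀ q₁ x 0 = qPoly m f q₀ q₁ x := by
  unfold pPoly qPoly
  simp [← Complex.ofReal_pow]

lemma deriv_q (m : ℕ) (f : ℕ → ℝ) (q₀ q₁ x : ℝ) :
    HasDerivAt (qPoly m f q₀ q₁)
      (q₁ - ∑ k ∈ Finset.range (m + 1), f k * x ^ (k + 1) / ((k : ℝ) + 1)) x := by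
  unfold qPoly
  apply HasDerivAt.sub
  · simpa using ((hasDerivAt_id x).const_mul q₁).const_add q₀
  · apply HasDerivAt.fun_sum
    intro k _
    have h := ((hasDerivAt_pow (k + 2) x).const_mul (f k)).div_const (((k : ℝ) + 2) * ((k : ℝ) + 1))
    refine h.congr_deriv ?_
    have h2 : ((k : ℝ) + 2) ≠ 0 := by positivity
    have h1 : ((k : ℝ) + 1) ≠ 0 := by positivity
    have hred : k + 2 - 1 = k + 1 := rfl
    rw [hred]
    push_cast
    field_simp

lemma deriv_deriv_q (m : ℕ) (f : ℕ → ℝ) (q₀ q₁ x : ℝ) :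
    deriv (deriv (qPoly m f q₀ q₁)) x = - fPoly m f x := by
  have h1 : deriv (qPoly m f q₀ q₁) = fun x =>
      q₁ - ∑ k ∈ Finset.range (m + 1), f k * x ^ (k + 1) / ((k : ℝ) + 1) :=
    funext fun x => (deriv_q m f q₀ q₁ x).deriv
  rw [h1]
  have hsum : HasDerivAt (fun x : ℝ =>
      ∑ k ∈ Finset.range (m + 1), f k * x ^ (k + 1) / ((k : ℝ) + 1))
      (fPoly m f x) x := by
    unfold fPoly
    apply HasDerivAt.fun_sum
    intro k _
    have h := ((hasDerivAt_pow (k + 1) x).const_mul (f k)).div_const ((k : ℝ) + 1)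
    refine h.congr_deriv ?_
    have h1 : ((k : ℝ) + 1) ≠ 0 := by positivity
    simp only [Nat.add_sub_cancel]
    push_cast
    field_simp
  have h2 : HasDerivAt (fun x : ℝ =>
      q₁ - ∑ k ∈ Finset.range (m + 1), f k * x ^ (k + 1) / ((k : ℝ) + 1))
      (- fPoly m f x) x :=
    ((hasDerivAt_const x q₁).sub hsum).congr_deriv (by ring)
  rw [h2.deriv]

theorem stmt18 (m : ℕ) (f : ℕ → ℝ) (q₀ q₁ κ₁ κ₂ : ℝ) :
    (∀ x y : ℝ, dxx (pPoly m f q₀ q₁) x y + dyy (pPoly m f q₀ q₁) x y = 0) ∧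
    (∀ x₁ : ℝ, x₁ < 0 →
      ∃ pp pm pyp pym : ℝ,
        Tendsto (fun y => pPoly m f q₀ q₁ x₁ y) (nhdsWithin 0 (Set.Ioi 0)) (nhds pp) ∧
        Tendsto (fun y => pPoly m f q₀ q₁ x₁ y) (nhdsWithin 0 (Set.Iio 0)) (nhds pm) ∧
        Tendsto (fun y => dy (pPoly m f q₀ q₁) x₁ y) (nhdsWithin 0 (Set.Ioi 0)) (nhds pyp) ∧
        Tendsto (fun y => dy (pPoly m f q₀ q₁) x₁ y) (nhdsWithin 0 (Set.Iio 0)) (nhds pym) ∧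
        -(κ₁/2) * pyp - (κ₁/2) * pym + pp = qPoly m f q₀ q₁ x₁ ∧
        (κ₁/2) * pyp + (κ₁/2) * pym + pm = qPoly m f q₀ q₁ x₁ ∧
        -(deriv (deriv (qPoly m f q₀ q₁)) x₁) = fPoly m f x₁ + κ₂ * (pyp - pym)) := by
  constructor
  · intro x y
    have hdx : dxx (pPoly m f q₀ q₁) x y =
        - ∑ k ∈ Finset.range (m + 1), f k * ((((x : ℂ) + Complex.I * y) ^ k).re) := by
      unfold dxx
      rw [funext fun t => (hasDerivAt_p_x m f q₀ q₁ y t).deriv]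
      exact (hasDerivAt_P1_x m f q₁ y x).deriv
    have hdy : dyy (pPoly m f q₀ q₁) x y =
        ∑ k ∈ Finset.range (m + 1), f k * ((((x : ℂ) + Complex.I * y) ^ k).re) := by
      unfold dyy
      rw [funext fun s => (hasDerivAt_p_y m f q₀ q₁ x s).deriv]
      exact (hasDerivAt_P2_y m f x y).deriv
    rw [hdx, hdy]; ring
  · intro x₁ _
    refine ⟨qPoly m f q₀ q₁ x₁, qPoly m f q₀ q₁ x₁, 0, 0, ?_, ?_, ?_, ?_, by ring, by ring, ?_⟩
    · have h : Tendsto (fun y => pPoly m f q₀ q₁ x₁ y) (nhdsWithin 0 (Set.Ioi 0))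
          (nhds (pPoly m f q₀ q₁ x₁ 0)) :=
        (cont_p m f q₀ q₁ x₁).continuousAt.tendsto.mono_left nhdsWithin_le_nhds
      rwa [pPoly_zero] at h
    · have h : Tendsto (fun y => pPoly m f q₀ q₁ x₁ y) (nhdsWithin 0 (Set.Iio 0))
          (nhds (pPoly m f q₀ q₁ x₁ 0)) :=
        (cont_p m f q₀ q₁ x₁).continuousAt.tendsto.mono_left nhdsWithin_le_nhds
      rwa [pPoly_zero] at h
    · have hdy : (fun y => dy (pPoly m f q₀ q₁) x₁ y) = fun y => P2 m f x₁ y :=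
        funext fun y => (hasDerivAt_p_y m f q₀ q₁ x₁ y).deriv
      rw [hdy]
      have h : Tendsto (fun y => P2 m f x₁ y) (nhdsWithin 0 (Set.Ioi 0))
          (nhds (P2 m f x₁ 0)) :=
        (cont_P2 m f x₁).continuousAt.tendsto.mono_left nhdsWithin_le_nhds
      rwa [P2_zero] at h
    · have hdy : (fun y => dy (pPoly m f q₀ q₁) x₁ y) = fun y => P2 m f x₁ y :=
        funext fun y => (hasDerivAt_p_y m f q₀ q₁ x₁ y).deriv
      rw [hdy]
      have h : Tendsto (fun y => P2 m f x₁ y) (nhdsWithin 0 (Set.Iio 0))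
          (nhds (P2 m f x₁ 0)) :=
        (cont_P2 m f x₁).continuousAt.tendsto.mono_left nhdsWithin_le_nhds
      rwa [P2_zero] at h
    · rw [deriv_deriv_q]; ring
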